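/- arXiv:1311.0036 — 2 statements merged into one kernel-verified Lean document; each statement's English description precedes it below -/
import Mathlib

section
/- If θ₁, θ₂ are positive reals with sin(θ₁) ≠ 0, sin(θ₂) ≠ 0, θ₁ > θ₂, and θ₁·cot(θ₁) = θ₂·cot(θ₂) > 0, then sin²(θ₁) > sin²(θ₂). -/
theorem sin_sq_gt (θ₁ θ₂ : ℝ) (h₁ : 0 < θ₁) (h₂ : 0 < θ₂)
    (hs₁ : Real.sin θ₁ ≠ 0) (hs₂ : Real.sin θ₂ ≠ 0) (hgt : θ₂ < θ₁)
    (heq : θ₁ * (Real.cos θ₁ / Real.sin θ₁) = θ₂ * (Real.cos θ₂ / Real.sin θ₂))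
    (hpos : 0 < θ₁ * (Real.cos θ₁ / Real.sin θ₁)) :
    (Real.sin θ₂) ^ 2 < (Real.sin θ₁) ^ 2 := by
  set c : ℝ := θ₁ * (Real.cos θ₁ / Real.sin θ₁) with hc
  have hc1 : c * Real.sin θ₁ = θ₁ * Real.cos θ₁ := by
    rw [hc]; field_simp
  have hc2 : c * Real.sin θ₂ = θ₂ * Real.cos θ₂ := by
    rw [heq]; field_simp
  have hq1 : (c * Real.sin θ₁) ^ 2 = (θ₁ * Real.cos θ₁) ^ 2 := by rw [hc1]
  have hq2 : (c * Real.sin θ₂) ^ 2 = (θ₂ * Real.cos θ₂) ^ 2 := by rw [hc2]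
  have hp1 : Real.sin θ₁ ^ 2 * (θ₁ ^ 2 + c ^ 2) = θ₁ ^ 2 := by
    have h := Real.sin_sq_add_cos_sq θ₁
    nlinarith [hq1]
  have hp2 : Real.sin θ₂ ^ 2 * (θ₂ ^ 2 + c ^ 2) = θ₂ ^ 2 := by
    have h := Real.sin_sq_add_cos_sq θ₂
    nlinarith [hq2]
  have hcpos : 0 < c := hpos
  have d1 : (0:ℝ) < θ₁ ^ 2 + c ^ 2 := by positivity
  have d2 : (0:ℝ) < θ₂ ^ 2 + c ^ 2 := by positivity
  have e1 : Real.sin θ₁ ^ 2 = θ₁ ^ 2 / (θ₁ ^ 2 + c ^ 2) := by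
    field_simp [hp1]
    exact hp1
  have e2 : Real.sin θ₂ ^ 2 = θ₂ ^ 2 / (θ₂ ^ 2 + c ^ 2) := by
    field_simp [hp2]
    exact hp2
  rw [e1, e2, div_lt_div_iff₀ d2 d1]
  have hθ : θ₂ ^ 2 < θ₁ ^ 2 := by nlinarith
  nlinarith [mul_lt_mul_of_pos_right hθ (pow_pos hcpos 2)]
end

section
/- Under the hypotheses of the previous statement, ∂_ξ f(t₀, ξ₀) = −(1/2)(k₂² − k₁²)·(1 + (t₀/(θ₁²θ₂²))·(a² − a)) < 0, and consequently the implicit curve f = 0 satisfies dt/dξ = (θ₁²θ₂² + t(a² − a))/(ξ(a² − a)) > t/ξ. -/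
lemma cot_sqrt_deriv (u : ℝ) (hu : 0 < u) (hs : Real.sin (Real.sqrt u) ≠ 0) :
    HasDerivAt (fun x : ℝ => Real.sqrt x * (Real.cos (Real.sqrt x) / Real.sin (Real.sqrt x)))
      (-(1/2) - ((Real.sqrt u * (Real.cos (Real.sqrt u) / Real.sin (Real.sqrt u)))^2
        - Real.sqrt u * (Real.cos (Real.sqrt u) / Real.sin (Real.sqrt u))) / (2*u)) u := by
  set s := Real.sqrt u with hsdef
  have hs0 : s ≠ 0 := (Real.sqrt_pos.2 hu).ne'
  have h1 : HasDerivAt Real.sqrt (1/(2*s)) u := Real.hasDerivAt_sqrt hu.ne'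
  have hc : HasDerivAt (fun x => Real.cos (Real.sqrt x)) (-Real.sin s * (1/(2*s))) u :=
    (Real.hasDerivAt_cos s).comp u h1
  have hsn : HasDerivAt (fun x => Real.sin (Real.sqrt x)) (Real.cos s * (1/(2*s))) u :=
    (Real.hasDerivAt_sin s).comp u h1
  have hd := hc.div hsn hs
  have hm := h1.mul hd
  convert hm using 1
  · rfl
  · rfl
  · rfl
  have hu' : s ^ 2 = u := Real.sq_sqrt hu.le
  have hpy : Real.sin s ^ 2 + Real.cos s ^ 2 = 1 := Real.sin_sq_add_cos_sq s
  simp only [Pi.div_apply]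
  rw [← hsdef]
  field_simp
  linear_combination (Real.cos s * Real.sin s - s * Real.cos s ^ 2) * hu'

theorem partial_xi_f_and_implicit_slope (k₁ k₂ : ℕ) (hk₁ : 0 < k₁) (hk : k₁ < k₂)
    (t₀ ξ₀ : ℝ) (ht₀ : 0 < t₀) (hξ₀ : 0 < ξ₀)
    (h₂ : t₀ - ξ₀ * (k₂ : ℝ) ^ 2 > Real.pi ^ 2)
    (h₁₂ : t₀ - ξ₀ * (k₁ : ℝ) ^ 2 > t₀ - ξ₀ * (k₂ : ℝ) ^ 2)
    (hs₁ : Real.sin (Real.sqrt (t₀ - ξ₀ * (k₁ : ℝ) ^ 2)) ≠ 0)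
    (hs₂ : Real.sin (Real.sqrt (t₀ - ξ₀ * (k₂ : ℝ) ^ 2)) ≠ 0)
    (a : ℝ)
    (ha : a = Real.sqrt (t₀ - ξ₀ * (k₁ : ℝ) ^ 2) *
        (Real.cos (Real.sqrt (t₀ - ξ₀ * (k₁ : ℝ) ^ 2)) /
          Real.sin (Real.sqrt (t₀ - ξ₀ * (k₁ : ℝ) ^ 2))))
    (hf : Real.sqrt (t₀ - ξ₀ * (k₁ : ℝ) ^ 2) *
        (Real.cos (Real.sqrt (t₀ - ξ₀ * (k₁ : ℝ) ^ 2)) /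
          Real.sin (Real.sqrt (t₀ - ξ₀ * (k₁ : ℝ) ^ 2))) =
      Real.sqrt (t₀ - ξ₀ * (k₂ : ℝ) ^ 2) *
        (Real.cos (Real.sqrt (t₀ - ξ₀ * (k₂ : ℝ) ^ 2)) /
          Real.sin (Real.sqrt (t₀ - ξ₀ * (k₂ : ℝ) ^ 2))))
    (ha1 : 1 < a) :
    HasDerivAt (fun ξ : ℝ =>
        Real.sqrt (t₀ - ξ * (k₁ : ℝ) ^ 2) *
          (Real.cos (Real.sqrt (t₀ - ξ * (k₁ : ℝ) ^ 2)) /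
            Real.sin (Real.sqrt (t₀ - ξ * (k₁ : ℝ) ^ 2))) -
        Real.sqrt (t₀ - ξ * (k₂ : ℝ) ^ 2) *
          (Real.cos (Real.sqrt (t₀ - ξ * (k₂ : ℝ) ^ 2)) /
            Real.sin (Real.sqrt (t₀ - ξ * (k₂ : ℝ) ^ 2))))
      (-(1 / 2) * ((k₂ : ℝ) ^ 2 - (k₁ : ℝ) ^ 2) *
        (1 + t₀ / ((t₀ - ξ₀ * (k₁ : ℝ) ^ 2) * (t₀ - ξ₀ * (k₂ : ℝ) ^ 2)) * (a ^ 2 - a))) ξ₀ ∧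
    -(1 / 2) * ((k₂ : ℝ) ^ 2 - (k₁ : ℝ) ^ 2) *
        (1 + t₀ / ((t₀ - ξ₀ * (k₁ : ℝ) ^ 2) * (t₀ - ξ₀ * (k₂ : ℝ) ^ 2)) * (a ^ 2 - a)) < 0 ∧
    -(-(1 / 2) * ((k₂ : ℝ) ^ 2 - (k₁ : ℝ) ^ 2) *
          (1 + t₀ / ((t₀ - ξ₀ * (k₁ : ℝ) ^ 2) * (t₀ - ξ₀ * (k₂ : ℝ) ^ 2)) * (a ^ 2 - a))) /
        (ξ₀ / (2 * (t₀ - ξ₀ * (k₁ : ℝ) ^ 2) * (t₀ - ξ₀ * (k₂ : ℝ) ^ 2)) *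
          ((k₂ : ℝ) ^ 2 - (k₁ : ℝ) ^ 2) * (a ^ 2 - a)) =
      ((t₀ - ξ₀ * (k₁ : ℝ) ^ 2) * (t₀ - ξ₀ * (k₂ : ℝ) ^ 2) + t₀ * (a ^ 2 - a)) /
        (ξ₀ * (a ^ 2 - a)) ∧
    ((t₀ - ξ₀ * (k₁ : ℝ) ^ 2) * (t₀ - ξ₀ * (k₂ : ℝ) ^ 2) + t₀ * (a ^ 2 - a)) /
        (ξ₀ * (a ^ 2 - a)) > t₀ / ξ₀ := by
  set u₁ : ℝ := t₀ - ξ₀ * (k₁ : ℝ) ^ 2 with hu₁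
  set u₂ : ℝ := t₀ - ξ₀ * (k₂ : ℝ) ^ 2 with hu₂
  have hπ : (0:ℝ) < Real.pi ^ 2 := by positivity
  have hu₂pos : 0 < u₂ := lt_trans hπ h₂
  have hu₁pos : 0 < u₁ := lt_trans hu₂pos h₁₂
  have hK : (k₁ : ℝ) ^ 2 < (k₂ : ℝ) ^ 2 := by
    have : (k₁ : ℝ) < (k₂ : ℝ) := by exact_mod_cast hk
    have h0 : (0:ℝ) ≤ (k₁ : ℝ) := by positivity
    nlinarith
  have haa : 0 < a ^ 2 - a := by nlinarith
  -- derivative part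
  have hderiv : HasDerivAt (fun ξ : ℝ =>
        Real.sqrt (t₀ - ξ * (k₁ : ℝ) ^ 2) *
          (Real.cos (Real.sqrt (t₀ - ξ * (k₁ : ℝ) ^ 2)) /
            Real.sin (Real.sqrt (t₀ - ξ * (k₁ : ℝ) ^ 2))) -
        Real.sqrt (t₀ - ξ * (k₂ : ℝ) ^ 2) *
          (Real.cos (Real.sqrt (t₀ - ξ * (k₂ : ℝ) ^ 2)) /
            Real.sin (Real.sqrt (t₀ - ξ * (k₂ : ℝ) ^ 2))))
      (-(1 / 2) * ((k₂ : ℝ) ^ 2 - (k₁ : ℝ) ^ 2) *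
        (1 + t₀ / (u₁ * u₂) * (a ^ 2 - a))) ξ₀ := by
    have haff₁ : HasDerivAt (fun ξ : ℝ => t₀ - ξ * (k₁ : ℝ) ^ 2) (-(k₁ : ℝ) ^ 2) ξ₀ := by
      simpa using ((hasDerivAt_id ξ₀).mul_const ((k₁:ℝ)^2)).const_sub t₀
    have haff₂ : HasDerivAt (fun ξ : ℝ => t₀ - ξ * (k₂ : ℝ) ^ 2) (-(k₂ : ℝ) ^ 2) ξ₀ := by
      simpa using ((hasDerivAt_id ξ₀).mul_const ((k₂:ℝ)^2)).const_sub t₀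
    have h1 := (cot_sqrt_deriv u₁ hu₁pos hs₁).comp ξ₀ haff₁
    have h2 := (cot_sqrt_deriv u₂ hu₂pos hs₂).comp ξ₀ haff₂
    have hsub := h1.sub h2
    convert hsub using 1
    · rfl
    · rfl
    · rfl
    rw [← ha, hu₁, hu₂] at *
    rw [← hf, ← ha]
    have hq1 : t₀ - (k₁:ℝ)^2 * ξ₀ ≠ 0 := by rw [mul_comm]; exact hu₁pos.ne'
    have hq2 : t₀ - (k₂:ℝ)^2 * ξ₀ ≠ 0 := by rw [mul_comm]; exact hu₂pos.ne'
    field_simp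
    ring
  refine ⟨hderiv, ?_, ?_, ?_⟩
  · have h1 : 0 < 1 + t₀ / (u₁ * u₂) * (a ^ 2 - a) := by positivity
    have h2 : 0 < (k₂ : ℝ) ^ 2 - (k₁ : ℝ) ^ 2 := by linarith
    nlinarith
  · have hKne : (k₂ : ℝ) ^ 2 - (k₁ : ℝ) ^ 2 ≠ 0 := by linarith
    field_simp
  · rw [gt_iff_lt, div_lt_div_iff₀ hξ₀ (by positivity)]
    nlinarith [mul_pos hu₁pos hu₂pos]
end
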